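/- Let a, b, c be nonzero integers and n a positive natural number such that the equation a·x + b·y = c·w·z^n (in the variables w, x, y, z) is partition regular over ℕ. If p is a prime such that the p-adic valuation v_p((a+b)/c) is neither 0 nor a positive multiple of n, then the equation is p-partition regular: for every k ∈ ℕ ∪ {0} and every finite partition of p^k·ℕ = {p^k·j : j ∈ ℕ, j ≥ 1}, some cell of the partition contains w, x, y, z satisfying a·x + b·y = c·w·z^n. -/

import Mathlib

-- exact valuation is stable under adding something more divisible
lemma aux_val_add (p : ℕ) [Fact p.Prime] (t s : ℤ) (ht : t ≠ 0)
    (hs : (p : ℤ) ^ (padicValInt p t + 1) ∣ s) :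
    padicValInt p (t + s) = padicValInt p t := by
  have h1 : (p : ℤ) ^ padicValInt p t ∣ t + s :=
    dvd_add (padicValInt_dvd t) (dvd_trans (pow_dvd_pow _ (Nat.le_succ _)) hs)
  have h2 : ¬ (p : ℤ) ^ (padicValInt p t + 1) ∣ t + s := by
    intro h
    have h3 : (p : ℤ) ^ (padicValInt p t + 1) ∣ t := by
      have := dvd_sub h hs
      simpa using this
    rw [padicValInt_dvd_iff] at h3
    rcases h3 with h3 | h3
    · exact ht h3
    · omega
  have hts : t + s ≠ 0 := by
    intro h; exact h2 (h ▸ dvd_zero _)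
  rw [padicValInt_dvd_iff] at h1 h2
  rcases h1 with h1 | h1
  · exact absurd h1 hts
  · rcases (not_or.mp h2) with ⟨_, h2⟩
    omega

-- congruent digit blocks give divisibility of the difference
lemma aux_digit (p s e m1 m2 : ℕ) (h1 : p ^ e ∣ m1) (h2 : p ^ e ∣ m2)
    (hd : m1 / p ^ e % p ^ s = m2 / p ^ e % p ^ s) :
    (p : ℤ) ^ (e + s) ∣ (m1 : ℤ) - (m2 : ℤ) := by
  have e1 : (m1 : ℤ) = (p : ℤ) ^ e * ((m1 / p ^ e : ℕ) : ℤ) := by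
    exact_mod_cast congrArg (Nat.cast : ℕ → ℤ) (Nat.mul_div_cancel' h1).symm
  have e2 : (m2 : ℤ) = (p : ℤ) ^ e * ((m2 / p ^ e : ℕ) : ℤ) := by
    exact_mod_cast congrArg (Nat.cast : ℕ → ℤ) (Nat.mul_div_cancel' h2).symm
  have hmod : ((p ^ s : ℕ) : ℤ) ∣ ((m2 / p ^ e : ℕ) : ℤ) - ((m1 / p ^ e : ℕ) : ℤ) :=
    (Nat.modEq_iff_dvd).mp hd
  have : (p : ℤ) ^ (e + s) ∣ (p : ℤ) ^ e * (((m1 / p ^ e : ℕ) : ℤ) - ((m2 / p ^ e : ℕ) : ℤ)) := by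
    rw [pow_add]
    apply mul_dvd_mul_left
    exact_mod_cast dvd_sub_comm.mp hmod
  calc (p:ℤ)^(e+s) ∣ (p : ℤ) ^ e * (((m1 / p ^ e : ℕ) : ℤ) - ((m2 / p ^ e : ℕ) : ℤ)) := this
    _ = (m1 : ℤ) - (m2 : ℤ) := by rw [mul_sub, ← e1, ← e2]

-- bound for the coloring index in the "not divisible" branch
lemma aux_bound (p k s r m : ℕ) [Fact p.Prime] (h : ¬ p ^ k ∣ m) :
    r + padicValNat p m * p ^ s + m / p ^ padicValNat p m % p ^ s < r + k * p ^ s := by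
  have hp1 : 1 < p := (Fact.out : p.Prime).one_lt
  have hm : m ≠ 0 := by rintro rfl; exact h (dvd_zero _)
  have hvk : padicValNat p m < k := by
    by_contra hle
    exact h (dvd_trans (pow_dvd_pow p (le_of_not_gt hle)) pow_padicValNat_dvd)
  have hps : 0 < p ^ s := pow_pos (by omega) s
  have hmod : m / p ^ padicValNat p m % p ^ s < p ^ s := Nat.mod_lt _ hps
  have h1 : padicValNat p m * p ^ s + m / p ^ padicValNat p m % p ^ s
      < (padicValNat p m + 1) * p ^ s := by
    rw [add_mul, one_mul]; omega
  have h2 : (padicValNat p m + 1) * p ^ s ≤ k * p ^ s :=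
    Nat.mul_le_mul_right _ (by omega)
  omega

-- uniqueness of (quotient, digit) decomposition
lemma aux_unique {P v1 d1 v2 d2 : ℕ} (h1 : d1 < P) (h2 : d2 < P)
    (h : v1 * P + d1 = v2 * P + d2) : v1 = v2 ∧ d1 = d2 := by
  have hv : v1 = v2 := by
    rcases Nat.lt_trichotomy v1 v2 with hl | he | hl
    · have : (v1 + 1) * P ≤ v2 * P := Nat.mul_le_mul_right _ (by omega)
      rw [add_mul, one_mul] at this; omega
    · exact he
    · have : (v2 + 1) * P ≤ v1 * P := Nat.mul_le_mul_right _ (by omega)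
      rw [add_mul, one_mul] at this; omega
  subst hv
  exact ⟨rfl, by omega⟩

def myColor (p k s r : ℕ) [Fact p.Prime] (C : ℕ → Fin r) (m : ℕ) : Fin (r + k * p ^ s) :=
  if h : p ^ k ∣ m then ⟨C m, Nat.lt_of_lt_of_le (C m).isLt (Nat.le_add_right _ _)⟩
  else ⟨r + padicValNat p m * p ^ s + m / p ^ padicValNat p m % p ^ s, aux_bound p k s r m h⟩

lemma myColor_pos (p k s r : ℕ) [Fact p.Prime] (C : ℕ → Fin r) (m : ℕ) (h : p ^ k ∣ m) :
    ((myColor p k s r C m : Fin _) : ℕ) = C m := by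
  simp [myColor, h]

lemma myColor_neg (p k s r : ℕ) [Fact p.Prime] (C : ℕ → Fin r) (m : ℕ) (h : ¬ p ^ k ∣ m) :
    ((myColor p k s r C m : Fin _) : ℕ)
      = r + padicValNat p m * p ^ s + m / p ^ padicValNat p m % p ^ s := by
  simp [myColor, h]

/-- If `a*x + b*y = c*w*z^n` is partition regular over the positive integers and `p` is a
prime such that `v_p((a+b)/c)` is neither `0` nor a positive multiple of `n`, then the
equation is `p`-partition regular: for every `k`, every finite partition of
`p^k·ℕ = {p^k * j : j ≥ 1}` has a cell containing a solution. -/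
theorem stmt_12 (a b c : ℤ) (ha : a ≠ 0) (hb : b ≠ 0) (hc : c ≠ 0) (n : ℕ) (hn : 0 < n)
    (hPR : ∀ (r : ℕ) (C : ℕ → Fin r), ∃ w x y z : ℕ,
      0 < w ∧ 0 < x ∧ 0 < y ∧ 0 < z ∧
      C w = C x ∧ C x = C y ∧ C y = C z ∧
      a * (x : ℤ) + b * (y : ℤ) = c * (w : ℤ) * (z : ℤ) ^ n)
    (p : ℕ) (hp : p.Prime)
    (hv0 : padicValRat p (((a : ℚ) + (b : ℚ)) / (c : ℚ)) ≠ 0)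
    (hvn : ∀ m : ℕ, 0 < m → padicValRat p (((a : ℚ) + (b : ℚ)) / (c : ℚ)) ≠ (n : ℤ) * m) :
    ∀ (k : ℕ) (r : ℕ) (C : ℕ → Fin r), ∃ w x y z : ℕ,
      (∃ j : ℕ, 0 < j ∧ w = p ^ k * j) ∧ (∃ j : ℕ, 0 < j ∧ x = p ^ k * j) ∧
      (∃ j : ℕ, 0 < j ∧ y = p ^ k * j) ∧ (∃ j : ℕ, 0 < j ∧ z = p ^ k * j) ∧
      C w = C x ∧ C x = C y ∧ C y = C z ∧
      a * (x : ℤ) + b * (y : ℤ) = c * (w : ℤ) * (z : ℤ) ^ n := by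
  haveI : Fact p.Prime := ⟨hp⟩
  intro k r C
  -- a + b ≠ 0
  have hA : a + b ≠ 0 := by
    intro h
    apply hv0
    have : ((a : ℚ) + (b : ℚ)) = ((a + b : ℤ) : ℚ) := by push_cast; ring
    rw [this, h]
    simp [padicValRat.zero]
  -- the valuation of (a+b)/c
  have hcast : ((a : ℚ) + (b : ℚ)) / (c : ℚ) = ((a + b : ℤ) : ℚ) / ((c : ℤ) : ℚ) := by
    push_cast; ring
  have hABQ : ((a + b : ℤ) : ℚ) ≠ 0 := by exact_mod_cast hA
  have hcQ : ((c : ℤ) : ℚ) ≠ 0 := by exact_mod_cast hc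
  have hval : padicValRat p (((a : ℚ) + (b : ℚ)) / (c : ℚ))
      = (padicValInt p (a + b) : ℤ) - (padicValInt p c : ℤ) := by
    rw [hcast, padicValRat.div hABQ hcQ, padicValRat.of_int, padicValRat.of_int]
  set δ := padicValInt p (a + b) with hδ
  set γ := padicValInt p c with hγ
  set s := δ + 1 with hs
  obtain ⟨w, x, y, z, hw, hx, hy, hz, c1, c2, c3, heq⟩ := hPR (r + k * p ^ s) (myColor p k s r C)
  by_cases hdw : p ^ k ∣ w
  · -- all four are divisible by p ^ k
    have hall : ∀ m : ℕ, myColor p k s r C m = myColor p k s r C w → p ^ k ∣ m := by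
      intro m hm
      by_contra hdm
      have h1 := myColor_neg p k s r C m hdm
      have h2 := myColor_pos p k s r C w hdw
      have hv2 := congrArg Fin.val hm
      rw [h1, h2] at hv2
      have h3 : r ≤ ((C w : Fin r) : ℕ) := by
        rw [← hv2]; exact le_trans (Nat.le_add_right _ _) (Nat.le_add_right _ _)
      exact absurd h3 (not_le.mpr (C w).isLt)
    have hdx : p ^ k ∣ x := hall x (c1.symm)
    have hdy : p ^ k ∣ y := hall y (c2.symm.trans c1.symm)
    have hdz : p ^ k ∣ z := hall z (c3.symm.trans (c2.symm.trans c1.symm))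
    have hcol : ∀ m1 m2 : ℕ, p ^ k ∣ m1 → p ^ k ∣ m2 →
        myColor p k s r C m1 = myColor p k s r C m2 → C m1 = C m2 := by
      intro m1 m2 h1 h2 h
      have e1 := myColor_pos p k s r C m1 h1
      have e2 := myColor_pos p k s r C m2 h2
      apply Fin.ext
      rw [← e1, ← e2, h]
    refine ⟨w, x, y, z, ?_, ?_, ?_, ?_, hcol w x hdw hdx c1, hcol x y hdx hdy c2,
      hcol y z hdy hdz c3, heq⟩
    · exact ⟨w / p ^ k, Nat.div_pos (Nat.le_of_dvd hw hdw) (pow_pos hp.pos _),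
        (Nat.mul_div_cancel' hdw).symm⟩
    · exact ⟨x / p ^ k, Nat.div_pos (Nat.le_of_dvd hx hdx) (pow_pos hp.pos _),
        (Nat.mul_div_cancel' hdx).symm⟩
    · exact ⟨y / p ^ k, Nat.div_pos (Nat.le_of_dvd hy hdy) (pow_pos hp.pos _),
        (Nat.mul_div_cancel' hdy).symm⟩
    · exact ⟨z / p ^ k, Nat.div_pos (Nat.le_of_dvd hz hdz) (pow_pos hp.pos _),
        (Nat.mul_div_cancel' hdz).symm⟩
  · -- contradiction branch
    exfalso
    have hall : ∀ m : ℕ, myColor p k s r C m = myColor p k s r C w → ¬ p ^ k ∣ m := by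
      intro m hm hdm
      have h1 := myColor_pos p k s r C m hdm
      have h2 := myColor_neg p k s r C w hdw
      have hv2 := congrArg Fin.val hm
      rw [h1, h2] at hv2
      have h3 : r ≤ ((C m : Fin r) : ℕ) := by
        rw [hv2]; exact le_trans (Nat.le_add_right _ _) (Nat.le_add_right _ _)
      exact absurd h3 (not_le.mpr (C m).isLt)
    have hdx : ¬ p ^ k ∣ x := hall x (c1.symm)
    have hdy : ¬ p ^ k ∣ y := hall y (c2.symm.trans c1.symm)
    have hdz : ¬ p ^ k ∣ z := hall z (c3.symm.trans (c2.symm.trans c1.symm))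
    set e := padicValNat p w with he
    have hps : 0 < p ^ s := pow_pos hp.pos _
    have hinfo : ∀ m1 m2 : ℕ, ¬ p ^ k ∣ m1 → ¬ p ^ k ∣ m2 →
        myColor p k s r C m1 = myColor p k s r C m2 →
        padicValNat p m1 = padicValNat p m2 ∧
          m1 / p ^ padicValNat p m1 % p ^ s = m2 / p ^ padicValNat p m2 % p ^ s := by
      intro m1 m2 h1 h2 h
      have e1 := myColor_neg p k s r C m1 h1
      have e2 := myColor_neg p k s r C m2 h2
      rw [h, e2] at e1
      exact aux_unique (Nat.mod_lt _ hps) (Nat.mod_lt _ hps) (by omega)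
    obtain ⟨hewx, hdwx⟩ := hinfo w x hdw hdx c1
    obtain ⟨hexy, hdxy⟩ := hinfo x y hdx hdy c2
    obtain ⟨heyz, _⟩ := hinfo y z hdy hdz c3
    -- all valuations equal e
    have hex : padicValNat p x = e := hewx.symm
    have hey : padicValNat p y = e := by rw [← hexy, hex]
    have hez : padicValNat p z = e := by rw [← heyz, hey]
    -- p^(e+s) divides x - y
    have hxy : (p : ℤ) ^ (e + s) ∣ (x : ℤ) - (y : ℤ) := by
      apply aux_digit p s e x y
      · have h4 : p ^ padicValNat p x ∣ x := pow_padicValNat_dvd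
        rwa [hex] at h4
      · have h4 : p ^ padicValNat p y ∣ y := pow_padicValNat_dvd
        rwa [hey] at h4
      · rw [hex, hey] at hdxy
        exact hdxy
    -- nonzero casts
    have hxZ : (x : ℤ) ≠ 0 := by exact_mod_cast hx.ne'
    have hyZ : (y : ℤ) ≠ 0 := by exact_mod_cast hy.ne'
    have hwZ : (w : ℤ) ≠ 0 := by exact_mod_cast hw.ne'
    have hzZ : (z : ℤ) ≠ 0 := by exact_mod_cast hz.ne'
    -- valuation of LHS
    have hvy : padicValInt p (y : ℤ) = e := by
      rw [padicValInt.of_nat, hey]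
    have hvAy : padicValInt p ((a + b) * (y : ℤ)) = δ + e := by
      rw [padicValInt.mul hA hyZ, hvy]
    have hAy0 : (a + b) * (y : ℤ) ≠ 0 := mul_ne_zero hA hyZ
    have hdvd2 : (p : ℤ) ^ (padicValInt p ((a + b) * (y : ℤ)) + 1) ∣ a * ((x : ℤ) - (y : ℤ)) := by
      rw [hvAy]
      apply Dvd.dvd.mul_left _ a
      calc (p : ℤ) ^ (δ + e + 1) = (p : ℤ) ^ (e + s) := by rw [hs]; ring_nf
        _ ∣ (x : ℤ) - (y : ℤ) := hxy
    have hLHS : padicValInt p (a * (x : ℤ) + b * (y : ℤ)) = δ + e := by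
      have hrw : a * (x : ℤ) + b * (y : ℤ)
          = (a + b) * (y : ℤ) + a * ((x : ℤ) - (y : ℤ)) := by ring
      rw [hrw, aux_val_add p _ _ hAy0 hdvd2, hvAy]
    -- valuation of RHS
    have hvzn : padicValInt p ((z : ℤ) ^ n) = n * e := by
      have : ((z : ℤ) ^ n) = ((z ^ n : ℕ) : ℤ) := by push_cast; ring
      rw [this, padicValInt.of_nat, padicValNat.pow z n, hez]
    have hRHS : padicValInt p (c * (w : ℤ) * (z : ℤ) ^ n) = γ + e + n * e := by
      rw [padicValInt.mul (mul_ne_zero hc hwZ) (pow_ne_zero n hzZ),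
        padicValInt.mul hc hwZ, padicValInt.of_nat, ← he, hvzn]
    have hfinal : γ + e + n * e = δ + e := by
      rw [← hRHS, ← heq, hLHS]
    set M := n * e with hM
    have hdg : δ = γ + M := by omega
    -- conclude
    rcases Nat.eq_zero_or_pos e with he0 | hepos
    · apply hv0
      rw [hval]
      have hM0 : M = 0 := by rw [hM, he0, Nat.mul_zero]
      rw [hdg, hM0]
      push_cast
      ring
    · apply hvn e hepos
      rw [hval, hdg, hM]
      push_cast
      ring
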